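/- If 0 < α < 1/2 then η_α is strictly convex on (0, π), and if 1/2 < α < 1 then η_α is strictly concave on (0, π). -/

import Mathlib

open Real Set

/-- If `0 < α < 1/2` then `η_α` is strictly convex on `(0, π)`;
if `1/2 < α < 1` then `η_α` is strictly concave on `(0, π)`. -/
theorem eta_convex_concave (α : ℝ) (hα0 : 0 < α) (hα1 : α < 1) :
    (α < 1 / 2 →
      StrictConvexOn ℝ (Ioo 0 π) (fun x : ℝ => 2 * arctan ((α / (1 - α)) * Real.cot (x / 2)))) ∧
    (1 / 2 < α →
      StrictConcaveOn ℝ (Ioo 0 π) (fun x : ℝ => 2 * arctan ((α / (1 - α)) * Real.cot (x / 2)))) := by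
  have h1α : 0 < 1 - α := by linarith
  set κ : ℝ := α / (1 - α) with hκdef
  have hκ : 0 < κ := div_pos hα0 h1α
  simp only [Real.cot_eq_cos_div_sin, ← mul_div_assoc]
  set f : ℝ → ℝ := fun x : ℝ => 2 * arctan (κ * Real.cos (x / 2) / Real.sin (x / 2)) with hf
  set F : ℝ → ℝ := fun x : ℝ =>
    -κ / (Real.sin (x / 2) ^ 2 + κ ^ 2 * Real.cos (x / 2) ^ 2) with hFdef
  -- the denominator is positive everywhere
  have hD : ∀ x : ℝ, 0 < Real.sin (x / 2) ^ 2 + κ ^ 2 * Real.cos (x / 2) ^ 2 := by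
    intro x
    rcases eq_or_ne (Real.cos (x / 2)) 0 with hc | hc
    · have h1 : Real.sin (x / 2) ^ 2 = 1 := by
        have := Real.sin_sq_add_cos_sq (x / 2); rw [hc] at this; nlinarith
      rw [hc, h1]; norm_num
    · have hc2 : 0 < Real.cos (x / 2) ^ 2 :=
        lt_of_le_of_ne (sq_nonneg _) (Ne.symm (pow_ne_zero 2 hc))
      have h1 : 0 < κ ^ 2 * Real.cos (x / 2) ^ 2 := mul_pos (pow_pos hκ 2) hc2
      nlinarith [sq_nonneg (Real.sin (x / 2))]
  -- basic positivity on the interval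
  have hsc : ∀ x ∈ Ioo (0 : ℝ) π, 0 < Real.sin (x / 2) ∧ 0 < Real.cos (x / 2) := by
    intro x hx
    obtain ⟨hx0, hxπ⟩ := hx
    constructor
    · exact Real.sin_pos_of_pos_of_lt_pi (by linarith) (by linarith [Real.pi_pos])
    · exact Real.cos_pos_of_mem_Ioo ⟨by linarith [Real.pi_pos], by linarith⟩
  -- derivative of f on (0, π)
  have hf' : ∀ x ∈ Ioo (0 : ℝ) π, HasDerivAt f (F x) x := by
    intro x hx
    obtain ⟨hs, hc⟩ := hsc x hx
    have hsne : Real.sin (x / 2) ≠ 0 := ne_of_gt hs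
    have hhalf : HasDerivAt (fun y : ℝ => y / 2) (1 / 2) x := (hasDerivAt_id x).div_const 2
    have hS : HasDerivAt (fun y : ℝ => Real.sin (y / 2)) (Real.cos (x / 2) * (1 / 2)) x :=
      ((Real.hasDerivAt_sin (x / 2)).comp x hhalf :)
    have hC : HasDerivAt (fun y : ℝ => Real.cos (y / 2)) (-Real.sin (x / 2) * (1 / 2)) x :=
      ((Real.hasDerivAt_cos (x / 2)).comp x hhalf :)
    have hU : HasDerivAt (fun y : ℝ => κ * Real.cos (y / 2)) (κ * (-Real.sin (x / 2) * (1 / 2))) x :=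
      hC.const_mul κ
    have hG : HasDerivAt (fun y : ℝ => κ * Real.cos (y / 2) / Real.sin (y / 2))
        ((κ * (-Real.sin (x / 2) * (1 / 2)) * Real.sin (x / 2) -
          κ * Real.cos (x / 2) * (Real.cos (x / 2) * (1 / 2))) / Real.sin (x / 2) ^ 2) x :=
      hU.div hS hsne
    have hA := ((Real.hasDerivAt_arctan (κ * Real.cos (x / 2) / Real.sin (x / 2))).comp x hG).const_mul 2
    refine hA.congr_deriv ?_
    symm
    have hDne : Real.sin (x / 2) ^ 2 + κ ^ 2 * Real.cos (x / 2) ^ 2 ≠ 0 := ne_of_gt (hD x)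
    have hpy : Real.sin (x / 2) ^ 2 + Real.cos (x / 2) ^ 2 = 1 := Real.sin_sq_add_cos_sq (x / 2)
    have h1 : 1 + (κ * Real.cos (x / 2) / Real.sin (x / 2)) ^ 2 =
        (Real.sin (x / 2) ^ 2 + κ ^ 2 * Real.cos (x / 2) ^ 2) / Real.sin (x / 2) ^ 2 := by
      field_simp
    have h2 : κ * (-Real.sin (x / 2) * (1 / 2)) * Real.sin (x / 2) -
        κ * Real.cos (x / 2) * (Real.cos (x / 2) * (1 / 2)) =
        -κ / 2 * (Real.sin (x / 2) ^ 2 + Real.cos (x / 2) ^ 2) := by ring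
    simp only [hFdef, h1, h2, hpy]
    rw [div_div_eq_mul_div, one_mul]
    field_simp
  -- derivative of F everywhere
  have hF' : ∀ x : ℝ, HasDerivAt F
      (κ * ((1 - κ ^ 2) * (Real.sin (x / 2) * Real.cos (x / 2))) /
        (Real.sin (x / 2) ^ 2 + κ ^ 2 * Real.cos (x / 2) ^ 2) ^ 2) x := by
    intro x
    have hhalf : HasDerivAt (fun y : ℝ => y / 2) (1 / 2) x := (hasDerivAt_id x).div_const 2
    have hS : HasDerivAt (fun y : ℝ => Real.sin (y / 2)) (Real.cos (x / 2) * (1 / 2)) x :=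
      ((Real.hasDerivAt_sin (x / 2)).comp x hhalf :)
    have hC : HasDerivAt (fun y : ℝ => Real.cos (y / 2)) (-Real.sin (x / 2) * (1 / 2)) x :=
      ((Real.hasDerivAt_cos (x / 2)).comp x hhalf :)
    have hS2 := hS.pow 2
    have hC2 := (hC.pow 2).const_mul (κ ^ 2)
    have hDen := hS2.add hC2
    have hQ := (hasDerivAt_const x (-κ)).div hDen (ne_of_gt (hD x))
    refine hQ.congr_deriv ?_
    symm
    have hDne : Real.sin (x / 2) ^ 2 + κ ^ 2 * Real.cos (x / 2) ^ 2 ≠ 0 := ne_of_gt (hD x)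
    simp only [Pi.add_apply, Pi.pow_apply]
    field_simp
    ring
  -- the second iterated derivative on the interval
  have h2 : ∀ x ∈ Ioo (0 : ℝ) π, deriv^[2] f x =
      κ * ((1 - κ ^ 2) * (Real.sin (x / 2) * Real.cos (x / 2))) /
        (Real.sin (x / 2) ^ 2 + κ ^ 2 * Real.cos (x / 2) ^ 2) ^ 2 := by
    intro x hx
    have hEq : deriv f =ᶠ[nhds x] F :=
      Filter.eventuallyEq_of_mem (isOpen_Ioo.mem_nhds hx) fun y hy => (hf' y hy).deriv
    have : deriv (deriv f) x = deriv F x := hEq.deriv_eq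
    simp only [Function.iterate_succ, Function.iterate_zero, Function.comp_apply, id_eq]
    rw [show deriv (deriv f) x = deriv F x from hEq.deriv_eq, (hF' x).deriv]
  have hcont : ContinuousOn f (Ioo 0 π) := fun y hy =>
    ((hf' y hy).differentiableAt.continuousAt).continuousWithinAt
  have hint : interior (Ioo (0 : ℝ) π) = Ioo 0 π := interior_Ioo
  constructor
  · intro hαhalf
    have hκ1 : κ < 1 := (div_lt_one h1α).mpr (by linarith)
    refine strictConvexOn_of_deriv2_pos (convex_Ioo 0 π) hcont fun x hx => ?_
    rw [hint] at hx
    rw [h2 x hx]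
    obtain ⟨hs, hc⟩ := hsc x hx
    have := hD x
    have hκsq : κ ^ 2 < 1 := by nlinarith
    exact div_pos (mul_pos hκ (mul_pos (by linarith) (mul_pos hs hc))) (by positivity)
  · intro hαhalf
    have hκ1 : 1 < κ := (one_lt_div h1α).mpr (by linarith)
    refine strictConcaveOn_of_deriv2_neg (convex_Ioo 0 π) hcont fun x hx => ?_
    rw [hint] at hx
    rw [h2 x hx]
    obtain ⟨hs, hc⟩ := hsc x hx
    have hDpos := hD x
    have hκsq : 1 < κ ^ 2 := by nlinarith
    apply div_neg_of_neg_of_pos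
    · exact mul_neg_of_pos_of_neg hκ
        (mul_neg_of_neg_of_pos (by linarith) (mul_pos hs hc))
    · positivity
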